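/- Let R be an irreducible simply-laced root system with highest root α_0 and simple root β_0 defining a maximal parabolic P. Write l(α) for the height of a root α (sum of coefficients in the simple-root expansion) and ρ_P for half the sum of roots in R^+ \ R_L^+. In the S-type case (V abelian, β̃ = α_0): l(β̃) = 2⟨ρ_P, β_0^∨⟩ - 1. -/
import Mathlib


open RealInnerProductSpace

open Finset in
theorem sum_invol' {V : Type*} (T : Finset V) (σ : V → V)
    (hmem : ∀ β ∈ T, σ β ∈ T) (hinv : ∀ β ∈ T, σ (σ β) = β)
    (g : V → ℝ) (hneg : ∀ β ∈ T, g (σ β) = - g β) :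
    ∑ β ∈ T, g β = 0 := by
  have h1 : ∑ β ∈ T, g β = ∑ β ∈ T, g (σ β) :=
    Finset.sum_nbij' σ σ hmem hmem hinv hinv (fun β hβ => by rw [hinv β hβ])
  have h2 : ∑ β ∈ T, g (σ β) = - ∑ β ∈ T, g β := by
    rw [← Finset.sum_neg_distrib]
    exact Finset.sum_congr rfl hneg
  linarith [h1, h2]

/-- In an irreducible simply-laced root system with simple roots `a i`,
distinguished simple root `a b0` whose coefficient in the highest root `α₀`
is `1` (the Siegel/abelian case), the height of `β̃ = α₀` equals
`2⟨ρ_P, β₀^∨⟩ - 1`, i.e. `∑ᵢ N(α₀)ᵢ = (∑_{α ∈ R⁺, N(α)_{β₀} ≠ 0} ⟨α, β₀^∨⟩) - 1`,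
where `2ρ_P = ∑_{α ∈ R⁺ - R_L⁺} α` and pairings are computed with the inner
product (all roots have norm² 2). -/
theorem stmt_7 (V : Type*) [NormedAddCommGroup V] [InnerProductSpace ℝ V]
    (ι : Type*) [Fintype ι] (a : ι → V) (Rpos : Finset V) (b0 : ι)
    (hli : LinearIndependent ℝ a)
    (N : V → ι → ℕ)
    (hcoef : ∀ α ∈ Rpos, α = ∑ i, (N α i : ℝ) • a i)
    (hsimple : ∀ i, a i ∈ Rpos)
    (hnorm : ∀ α ∈ Rpos, ⟪α, α⟫ = 2)
    (hrefl : ∀ α ∈ Rpos, ∀ β ∈ Rpos,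
      β - ⟪β, α⟫ • α ∈ Rpos ∨ -(β - ⟪β, α⟫ • α) ∈ Rpos)
    (α0 : V) (hα0 : α0 ∈ Rpos)
    (hhigh : ∀ α ∈ Rpos, ∀ i, N α i ≤ N α0 i)
    (hS : N α0 b0 = 1) :
    (∑ i, (N α0 i : ℝ))
      = (∑ α ∈ Rpos, if N α b0 ≠ 0 then ⟪α, a b0⟫ else 0) - 1 := by
  classical
  -- uniqueness of coefficients
  have huniq : ∀ f g : ι → ℝ, ∑ i, f i • a i = ∑ i, g i • a i → ∀ i, f i = g i := by
    intro f g h i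
    have h0 : ∑ j, (f j - g j) • a j = 0 := by
      simp only [sub_smul, Finset.sum_sub_distrib, h, sub_self]
    have := Fintype.linearIndependent_iff.mp hli (fun j => f j - g j) h0 i
    linarith
  have hkey : ∀ γ ∈ Rpos, ∀ f : ι → ℝ, γ = ∑ i, f i • a i → ∀ i, (N γ i : ℝ) = f i := by
    intro γ hγ f hf i
    exact huniq (fun i => (N γ i : ℝ)) f (by rw [← hcoef γ hγ]; exact hf) i
  have hne0 : ∀ α ∈ Rpos, α ≠ 0 := by
    intro α hα h0
    have := hnorm α hα
    rw [h0] at this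
    simp at this
  have hnegnot : ∀ α ∈ Rpos, -α ∉ Rpos := by
    intro α hα hneg
    have h0 : ∑ i, ((N α i : ℝ) + (N (-α) i : ℝ)) • a i = 0 := by
      simp only [add_smul, Finset.sum_add_distrib, ← hcoef α hα, ← hcoef (-α) hneg]
      simp
    have hz := Fintype.linearIndependent_iff.mp hli _ h0
    apply hne0 α hα
    rw [hcoef α hα]
    refine Finset.sum_eq_zero fun i _ => ?_
    have h1 := hz i
    have h2 : (0:ℝ) ≤ (N α i : ℝ) := Nat.cast_nonneg _
    have h3 : (0:ℝ) ≤ (N (-α) i : ℝ) := Nat.cast_nonneg _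
    have h4 : (N α i : ℝ) = 0 := by linarith
    rw [h4, zero_smul]
  -- expansion of c • a i as a coefficient sum
  have hsmul : ∀ (c : ℝ) i, c • a i = ∑ j, (if j = i then c else 0) • a j := by
    intro c i
    symm
    simp [ite_smul]
  -- reflections by simple roots stay positive
  have hreflpos : ∀ i, ∀ β ∈ Rpos, β ≠ a i → β - ⟪β, a i⟫ • a i ∈ Rpos := by
    intro i β hβ hne
    rcases hrefl (a i) (hsimple i) β hβ with h | h
    · exact h
    · exfalso
      have hδe : -(β - ⟪β, a i⟫ • a i)
          = ∑ j, ((if j = i then ⟪β, a i⟫ else 0) - (N β j : ℝ)) • a j := by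
        simp only [sub_smul, Finset.sum_sub_distrib, ← hsmul, ← hcoef β hβ]
        abel
      have hδc := hkey _ h _ hδe
      have hother : ∀ j, j ≠ i → (N β j : ℝ) = 0 := by
        intro j hj
        have h1 := hδc j
        rw [if_neg hj] at h1
        have h2 : (0:ℝ) ≤ (N (-(β - ⟪β, a i⟫ • a i)) j : ℝ) := Nat.cast_nonneg _
        have h3 : (0:ℝ) ≤ (N β j : ℝ) := Nat.cast_nonneg _
        linarith
      have hβe : β = (N β i : ℝ) • a i := by
        conv_lhs => rw [hcoef β hβ]
        rw [Finset.sum_eq_single i]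
        · intro j _ hj
          rw [hother j hj, zero_smul]
        · intro hi
          exact absurd (Finset.mem_univ i) hi
      have h2 : ((N β i : ℝ))^2 * 2 = 2 := by
        have hn := hnorm β hβ
        rw [hβe, real_inner_smul_left, real_inner_smul_right,
          hnorm (a i) (hsimple i)] at hn
        nlinarith [hn]
      have h3 : (N β i : ℝ) = 1 := by
        have hnn : (0:ℝ) ≤ (N β i : ℝ) := Nat.cast_nonneg _
        nlinarith [hnn, h2]
      exact hne (by rw [hβe, h3, one_smul])
  -- coefficients of β - c • a i when it is a positive root
  have hcoeff : ∀ i (c : ℝ), ∀ β ∈ Rpos, β - c • a i ∈ Rpos →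
      ∀ j, (N (β - c • a i) j : ℝ) = (N β j : ℝ) - (if j = i then c else 0) := by
    intro i c β hβ hmem j
    refine hkey _ hmem (fun j => (N β j : ℝ) - if j = i then c else 0) ?_ j
    simp only [sub_smul, Finset.sum_sub_distrib, ← hsmul, ← hcoef β hβ]
  -- integrality and nonnegativity of ⟪α0, a i⟫
  have hdomint : ∀ i, ∃ z : ℤ, 0 ≤ z ∧ (z : ℝ) = ⟪α0, a i⟫ := by
    intro i
    by_cases he : α0 = a i
    · refine ⟨2, by norm_num, ?_⟩
      rw [he, hnorm (a i) (hsimple i)]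
      norm_num
    · have hγ := hreflpos i α0 hα0 he
      have hc := hcoeff i ⟪α0, a i⟫ α0 hα0 hγ i
      rw [if_pos rfl] at hc
      refine ⟨(N α0 i : ℤ) - (N (α0 - ⟪α0, a i⟫ • a i) i : ℤ), ?_, ?_⟩
      · have := hhigh _ hγ i
        omega
      · push_cast
        linarith [hc]
  choose zfun hz0 hzv using hdomint
  -- ⟪β, α0⟫ is a nonnegative integer for β positive
  have hdom : ∀ β ∈ Rpos, ∃ z : ℤ, 0 ≤ z ∧ (z : ℝ) = ⟪β, α0⟫ := by
    intro β hβ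
    refine ⟨∑ i, (N β i : ℤ) * zfun i, Finset.sum_nonneg fun i _ =>
      mul_nonneg (Int.ofNat_nonneg _) (hz0 i), ?_⟩
    have hexp : ⟪β, α0⟫ = ∑ i, (N β i : ℝ) * ⟪a i, α0⟫ := by
      conv_lhs => rw [hcoef β hβ]
      rw [sum_inner]
      exact Finset.sum_congr rfl fun i _ => real_inner_smul_left _ _ _
    rw [hexp]
    push_cast
    refine Finset.sum_congr rfl fun i _ => ?_
    rw [hzv i, real_inner_comm]
  -- pairing dichotomy with α0
  have hpair : ∀ β ∈ Rpos, β ≠ α0 → ⟪β, α0⟫ = 0 ∨ ⟪β, α0⟫ = 1 := by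
    intro β hβ hne
    obtain ⟨z, hz, hv⟩ := hdom β hβ
    have hnn : ⟪β - α0, β - α0⟫ = 4 - 2 * ⟪β, α0⟫ := by
      rw [inner_sub_left, inner_sub_right, inner_sub_right, hnorm β hβ, hnorm α0 hα0,
        real_inner_comm α0 β]
      ring
    have hge : (0:ℝ) ≤ 4 - 2 * ⟪β, α0⟫ := by
      rw [← hnn]; exact real_inner_self_nonneg
    have hne2 : ⟪β, α0⟫ ≠ 2 := by
      intro h2
      have : ⟪β - α0, β - α0⟫ = 0 := by rw [hnn, h2]; ring
      have := inner_self_eq_zero.mp this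
      exact hne (by rwa [sub_eq_zero] at this)
    have hzle : z ≤ 1 := by
      by_contra hlt
      have h2 : 2 ≤ z := by omega
      have : (2:ℝ) ≤ ⟪β, α0⟫ := by rw [← hv]; exact_mod_cast h2
      have : ⟪β, α0⟫ = 2 := by linarith
      exact hne2 this
    interval_cases z
    · left; rw [← hv]; norm_num
    · right; rw [← hv]; norm_num
  -- if ⟪β, α0⟫ = 1 and β ≠ α0 then α0 - β is a positive root
  have hsub : ∀ β ∈ Rpos, β ≠ α0 → ⟪β, α0⟫ = 1 → α0 - β ∈ Rpos := by
    intro β hβ hne h1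
    have hcm : ⟪α0, β⟫ = 1 := by rw [real_inner_comm]; exact h1
    rcases hrefl β hβ α0 hα0 with h | h
    · rwa [hcm, one_smul] at h
    · exfalso
      rw [hcm, one_smul, neg_sub] at h
      have hc := hkey _ h (fun j => (N β j : ℝ) - (N α0 j : ℝ)) ?_
      · apply hne
        have hall : ∀ j, (N β j : ℝ) = (N α0 j : ℝ) := by
          intro j
          have h1' := hc j
          have h2 : (N β j : ℝ) ≤ (N α0 j : ℝ) := by exact_mod_cast hhigh β hβ j
          have h3 : (0:ℝ) ≤ (N (β - α0) j : ℝ) := Nat.cast_nonneg _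
          linarith
        rw [hcoef β hβ, hcoef α0 hα0]
        exact Finset.sum_congr rfl fun j _ => by rw [hall j]
      · simp only [sub_smul, Finset.sum_sub_distrib, ← hcoef β hβ, ← hcoef α0 hα0]
  -- coefficients of α0 - β
  have hcoefsub : ∀ β ∈ Rpos, α0 - β ∈ Rpos →
      ∀ j, (N (α0 - β) j : ℝ) = (N α0 j : ℝ) - (N β j : ℝ) := by
    intro β hβ hmem j
    refine hkey _ hmem (fun j => (N α0 j : ℝ) - (N β j : ℝ)) ?_ j
    simp only [sub_smul, Finset.sum_sub_distrib, ← hcoef β hβ, ← hcoef α0 hα0]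
  -- the reflection involution and its inner-product flip
  have hflip : ∀ i β, ⟪β - ⟪β, a i⟫ • a i, a i⟫ = - ⟪β, a i⟫ := by
    intro i β
    rw [inner_sub_left, real_inner_smul_left, hnorm (a i) (hsimple i)]
    ring
  have hinvol : ∀ i β, (β - ⟪β, a i⟫ • a i) - ⟪β - ⟪β, a i⟫ • a i, a i⟫ • a i = β := by
    intro i β
    rw [hflip i β, neg_smul, sub_neg_eq_add, sub_add_cancel]
  -- sum over all positive roots of pairing with a simple root is 2
  have h2rho : ∀ i, ∑ β ∈ Rpos, ⟪β, a i⟫ = 2 := by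
    intro i
    rw [← Finset.sum_erase_add Rpos _ (hsimple i), hnorm (a i) (hsimple i)]
    have h0 : ∑ β ∈ Rpos.erase (a i), ⟪β, a i⟫ = 0 := by
      refine sum_invol' _ (fun β => β - ⟪β, a i⟫ • a i) ?_ (fun β _ => hinvol i β) _
        (fun β _ => hflip i β)
      intro β hβ
      obtain ⟨hne, hβR⟩ := Finset.mem_erase.mp hβ
      have hmem := hreflpos i β hβR hne
      refine Finset.mem_erase.mpr ⟨?_, hmem⟩
      intro heq
      -- β - c • a i = a i  ⟹  β = -a i (using norms), contradiction
      have hb' : β = a i + ⟪β, a i⟫ • a i := eq_add_of_sub_eq heq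
      have hb : β = (1 + ⟪β, a i⟫) • a i := by
        rw [add_smul, one_smul]; exact hb'
      have hcv : ⟪β, a i⟫ = (1 + ⟪β, a i⟫) * 2 := by
        conv_lhs => rw [hb]
        rw [real_inner_smul_left, hnorm (a i) (hsimple i)]
      have hc2 : ⟪β, a i⟫ = -2 := by linarith
      have hβv : β = -a i := by
        rw [hb, hc2]; norm_num
      exact hnegnot β hβR (by rw [hβv, neg_neg]; exact hsimple i)
    rw [h0]; ring
  set S := Rpos.filter (fun β => N β b0 ≠ 0) with hSdef
  -- coefficients of simple roots
  have hNa : ∀ i j, (N (a i) j : ℝ) = if j = i then 1 else 0 := by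
    intro i j
    refine hkey _ (hsimple i) (fun j => if j = i then 1 else 0) ?_ j
    rw [← hsmul 1 i, one_smul]
  -- sum over S of pairing with a simple root ≠ b0 is 0
  have hSsum : ∀ i, i ≠ b0 → ∑ β ∈ S, ⟪β, a i⟫ = 0 := by
    intro i hi
    refine sum_invol' _ (fun β => β - ⟪β, a i⟫ • a i) ?_ (fun β _ => hinvol i β) _
      (fun β _ => hflip i β)
    intro β hβ
    obtain ⟨hβR, hNβ⟩ := Finset.mem_filter.mp hβ
    have hne : β ≠ a i := by
      intro heq
      apply hNβ
      have := hNa i b0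
      rw [if_neg (fun h => hi h.symm)] at this
      rw [heq]
      exact_mod_cast this
    have hmem := hreflpos i β hβR hne
    refine Finset.mem_filter.mpr ⟨hmem, ?_⟩
    have hc := hcoeff i ⟪β, a i⟫ β hβR hmem b0
    rw [if_neg (fun h => hi h.symm)] at hc
    simp only [sub_zero] at hc
    intro h0
    apply hNβ
    have : (N β b0 : ℝ) = 0 := by rw [← hc, h0]; norm_num
    exact_mod_cast this
  -- rewrite the goal sum as a sum over S
  have hXfilter : (∑ α ∈ Rpos, if N α b0 ≠ 0 then ⟪α, a b0⟫ else 0)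
      = ∑ β ∈ S, ⟪β, a b0⟫ := (Finset.sum_filter _ _).symm
  -- ∑_{S} ⟪β, α0⟫ = ∑_{S} ⟪β, a b0⟫
  have hexpand : ∀ (T : Finset V), (∀ β ∈ T, β ∈ Rpos) →
      ∑ β ∈ T, ⟪β, α0⟫ = ∑ i, (N α0 i : ℝ) * ∑ β ∈ T, ⟪β, a i⟫ := by
    intro T hT
    have h1 : ∀ β ∈ T, ⟪β, α0⟫ = ∑ i, (N α0 i : ℝ) * ⟪β, a i⟫ := by
      intro β hβ
      conv_lhs => rw [hcoef α0 hα0]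
      rw [inner_sum]
      exact Finset.sum_congr rfl fun i _ => real_inner_smul_right _ _ _
    rw [Finset.sum_congr rfl h1, Finset.sum_comm]
    exact Finset.sum_congr rfl fun i _ => by rw [Finset.mul_sum]
  have hXα0 : ∑ β ∈ S, ⟪β, α0⟫ = ∑ β ∈ S, ⟪β, a b0⟫ := by
    rw [hexpand S (fun β hβ => (Finset.mem_filter.mp hβ).1)]
    rw [Finset.sum_eq_single b0]
    · rw [hS]; norm_num
    · intro i _ hi
      rw [hSsum i hi, mul_zero]
    · intro h
      exact absurd (Finset.mem_univ b0) h
  -- height identity: ∑_{Rpos} ⟪β, α0⟫ = 2 * height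
  have hl : ∑ β ∈ Rpos, ⟪β, α0⟫ = 2 * ∑ i, (N α0 i : ℝ) := by
    rw [hexpand Rpos (fun β hβ => hβ), Finset.mul_sum]
    exact Finset.sum_congr rfl fun i _ => by rw [h2rho i]; ring
  -- main cancellation
  have hmain : 2 * (∑ β ∈ S, ⟪β, α0⟫) - ∑ β ∈ Rpos, ⟪β, α0⟫ = 2 := by
    set g : V → ℝ := fun β => (if N β b0 ≠ 0 then 2 else 0) * ⟪β, α0⟫ - ⟪β, α0⟫ with hgdef
    have hgsum : ∑ β ∈ Rpos, g β
        = 2 * (∑ β ∈ S, ⟪β, α0⟫) - ∑ β ∈ Rpos, ⟪β, α0⟫ := by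
      rw [Finset.sum_sub_distrib]
      congr 1
      rw [hSdef, Finset.mul_sum, Finset.sum_filter]
      refine Finset.sum_congr rfl fun β _ => ?_
      by_cases h : N β b0 ≠ 0 <;> simp [h]
    have hgα0 : g α0 = 2 := by
      have hne : N α0 b0 ≠ 0 := by rw [hS]; norm_num
      simp only [hgdef, if_pos hne, hnorm α0 hα0]
      ring
    have herase : ∑ β ∈ Rpos.erase α0, g β = 0 := by
      have hfil : ∑ β ∈ (Rpos.erase α0).filter (fun β => ⟪β, α0⟫ = 1), g β
          = ∑ β ∈ Rpos.erase α0, g β := by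
        apply Finset.sum_filter_of_ne
        intro β hβ hg
        obtain ⟨hne, hβR⟩ := Finset.mem_erase.mp hβ
        rcases hpair β hβR hne with h0 | h1
        · exfalso; apply hg; simp [hgdef, h0]
        · exact h1
      rw [← hfil]
      refine sum_invol' _ (fun β => α0 - β) ?_ (fun β _ => sub_sub_cancel α0 β) _ ?_
      · intro β hβ
        obtain ⟨hβe, h1⟩ := Finset.mem_filter.mp hβ
        obtain ⟨hne, hβR⟩ := Finset.mem_erase.mp hβe
        have hγ : α0 - β ∈ Rpos := hsub β hβR hne h1
        refine Finset.mem_filter.mpr ⟨Finset.mem_erase.mpr ⟨?_, hγ⟩, ?_⟩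
        · intro h
          exact hne0 β hβR (sub_eq_self.mp h)
        · rw [inner_sub_left, hnorm α0 hα0, h1]; norm_num
      · intro β hβ
        obtain ⟨hβe, h1⟩ := Finset.mem_filter.mp hβ
        obtain ⟨hne, hβR⟩ := Finset.mem_erase.mp hβe
        have hγ : α0 - β ∈ Rpos := hsub β hβR hne h1
        have hγ1 : ⟪α0 - β, α0⟫ = 1 := by
          rw [inner_sub_left, hnorm α0 hα0, h1]; norm_num
        have hco := hcoefsub β hβR hγ b0
        rw [hS] at hco
        have hble : N β b0 ≤ 1 := hS ▸ hhigh β hβR b0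
        rcases Nat.le_one_iff_eq_zero_or_eq_one.mp hble with h0 | hone
        · have hγb : N (α0 - β) b0 ≠ 0 := by
            intro hzero
            rw [hzero, h0] at hco
            norm_num at hco
          simp only [hgdef, if_pos hγb, if_neg (by simp [h0] : ¬ N β b0 ≠ 0), hγ1, h1]
          ring
        · have hγb : ¬ N (α0 - β) b0 ≠ 0 := by
            have h0' : (N (α0 - β) b0 : ℝ) = 0 := by rw [hco, hone]; norm_num
            have h0'' : N (α0 - β) b0 = 0 := by exact_mod_cast h0'
            simp [h0'']
          simp only [hgdef, if_neg hγb, if_pos (by simp [hone] : N β b0 ≠ 0), hγ1, h1]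
          ring
    rw [← hgsum, ← Finset.sum_erase_add Rpos g hα0, herase, hgα0]
    norm_num
  rw [hXfilter, ← hXα0]
  linarith [hmain, hl]
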